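/- Let n, r be natural numbers, g : ℤ, Q a symmetric r×r integer matrix, A an n×r integer matrix with all entries in {0,1}, b : Fin n → ℤ with entries in {0,1}, j : Fin n, and β ∈ {0,1} ⊆ ℤ. Define the Y-basis projector P on functions f : (Fin n → ZMod 2) → ℂ by (P f)(y) = (1/2) · ∑_{k∈{0,1}} i^{(2β+1)·((y j).val − k)} · f(Function.update y j k). Let ã : Fin (r+1) → ℤ be row j of A extended by a final entry 0; let A'' be the n×(r+1) integer matrix whose first r columns are those of A except that row j is replaced by zero, and whose last column is the standard basis vector e_j; let b' equal b except that its j-th entry is 0; and let Q^{(Y)} be the (r+1)×(r+1) matrix obtained by extending Q with a zero last row and column and adding (2·b_j + 2·β − 1) • (ã * ãᵀ) + (2β+1) • (e_{last} * e_{last}ᵀ), where e_{last} : Fin (r+1) → ℤ is the last standard basis vector and v * wᵀ denotes the outer product. Then Real.sqrt 2 • (P ψ[g,Q,A,b]) = ψ[g − (4β+2)·b_j, Q^{(Y)}, A'', b'] (the right-hand side being a rank-(r+1) quadratic form expansion with normalisation 1/√(2^{r+1})). -/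

import Mathlib

open Matrix

/-- The integer lift of a `ZMod 2` vector: a bit vector. -/
def intify {r : ℕ} (v : Fin r → ZMod 2) : Fin r → ℤ := fun k => ((v k).val : ℤ)

/-- Entrywise reduction of an integer vector modulo 2. -/
def red₂ {n : ℕ} (x : Fin n → ℤ) : Fin n → ZMod 2 := fun j => (x j : ZMod 2)

/-- The indicator function (standard basis vector) of `v : Fin n → ZMod 2`. -/
def ind {n : ℕ} (v : Fin n → ZMod 2) : (Fin n → ZMod 2) → ℂ := fun y => if y = v then 1 else 0

/-- The eighth root of unity `τ = e^{iπ/4} = √i`. -/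
noncomputable def τ : ℂ := Complex.exp (Real.pi * Complex.I / 4)

/-- The quadratic form expansion `ψ[g,Q,A,b]`:
`(τ^g / √(2^m)) • ∑_{bit vectors x} i^{xᵀ Q x} • e_{red₂(A x + b)}`. -/
noncomputable def qfe (n m : ℕ) (g : ℤ) (Q : Matrix (Fin m) (Fin m) ℤ)
    (A : Matrix (Fin n) (Fin m) ℤ) (b : Fin n → ℤ) : (Fin n → ZMod 2) → ℂ :=
  (τ ^ g / (Real.sqrt (2 ^ m) : ℂ)) •
    ∑ v : Fin m → ZMod 2,
      (Complex.I ^ (intify v ⬝ᵥ Q.mulVec (intify v))) • ind (red₂ (A.mulVec (intify v) + b))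

/- ## auxiliary lemmas -/

lemma I_zpow_congr' {a b : ℤ} (h : (4:ℤ) ∣ a - b) : Complex.I ^ a = Complex.I ^ b := by
  obtain ⟨t, ht⟩ := h
  have ha : a = b + 4 * t := by linarith
  subst ha
  have h4 : Complex.I ^ (4:ℤ) = 1 := by
    rw [show (4:ℤ) = ((4:ℕ):ℤ) by norm_num, zpow_natCast, Complex.I_pow_four]
  rw [zpow_add₀ Complex.I_ne_zero, _root_.zpow_mul, h4, _root_.one_zpow, mul_one]

lemma tau_sq' : τ ^ (2:ℤ) = Complex.I := by
  rw [τ, ← Complex.exp_int_mul]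
  have : (2:ℤ) * (Real.pi * Complex.I / 4) = (Real.pi / 2 : ℝ) * Complex.I := by
    push_cast; ring
  rw [this, Complex.exp_mul_I, ← Complex.ofReal_cos, ← Complex.ofReal_sin,
    Real.cos_pi_div_two, Real.sin_pi_div_two]
  simp

lemma tau_ne_zero' : τ ≠ 0 := Complex.exp_ne_zero _

lemma val_intCast_two' (a : ℤ) : (((a : ZMod 2).val : ℤ)) = a % 2 := by
  have h20 : (2 : ZMod 2) = 0 := by decide
  rcases Int.even_or_odd a with ⟨u, hu⟩ | ⟨u, hu⟩ <;> subst hu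
  · have h2 : ((u + u : ℤ) : ZMod 2) = 0 := by push_cast; rw [← two_mul, h20, zero_mul]
    rw [h2, ZMod.val_zero]; omega
  · have h2 : ((2 * u + 1 : ℤ) : ZMod 2) = 1 := by push_cast; rw [h20, zero_mul, zero_add]
    rw [h2, ZMod.val_one]; omega

lemma sq_mod4' (a : ℤ) : (4:ℤ) ∣ a * a - ((a : ZMod 2).val : ℤ) := by
  rw [val_intCast_two']
  rcases Int.even_or_odd a with ⟨u, hu⟩ | ⟨u, hu⟩ <;> subst hu
  · have h : (u+u) % 2 = 0 := by omega
    rw [h]; exact ⟨u*u, by ring⟩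
  · have h : (2*u+1) % 2 = 1 := by omega
    rw [h]; exact ⟨u + u*u, by ring⟩

lemma phase_arith' (β bj a m : ℤ) (hβ : β = 0 ∨ β = 1) (hbj : bj = 0 ∨ bj = 1)
    (hm : m = 0 ∨ m = 1) :
    (4:ℤ) ∣ (-((2*β+1)*bj) + ((2*bj+2*β-1)*(a*a) + (2*β+1)*(m*m)))
      - (2*β+1)*(m - (((a + bj : ℤ) : ZMod 2).val : ℤ)) := by
  rw [val_intCast_two']
  rcases Int.even_or_odd a with ⟨u, hu⟩ | ⟨u, hu⟩ <;> subst hu <;>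
    rcases hβ with rfl | rfl <;> rcases hbj with rfl | rfl <;> rcases hm with rfl | rfl <;>
    · ring_nf
      omega

lemma zcast_val' (k : ZMod 2) : (((k.val : ℤ)) : ZMod 2) = k := by revert k; decide

lemma upd_eq_iff' {N : ℕ} (j : Fin N) (y c : Fin N → ZMod 2) (k : ZMod 2) :
    Function.update y j k = c ↔ (k = c j ∧ Function.update c j (y j) = y) := by
  constructor
  · rintro rfl
    refine ⟨(Function.update_self j k y).symm, ?_⟩
    rw [Function.update_idem, Function.update_eq_self]
  · rintro ⟨rfl, h⟩
    conv_lhs => rw [← h]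
    rw [Function.update_idem, Function.update_eq_self]

lemma eq_upd_iff' {N : ℕ} (j : Fin N) (y c : Fin N → ZMod 2) (k : ZMod 2) :
    y = Function.update c j k ↔ (k = y j ∧ Function.update c j (y j) = y) := by
  constructor
  · intro h
    have hk : k = y j := by rw [h, Function.update_self]
    subst hk
    exact ⟨rfl, h.symm⟩
  · rintro ⟨rfl, h⟩
    exact h.symm

lemma intify_snoc' {r : ℕ} (v : Fin r → ZMod 2) (k : ZMod 2) :
    intify (Fin.snoc v k) = Fin.snoc (intify v) ((k.val : ℤ)) := by
  funext l
  refine Fin.lastCases ?_ (fun i => ?_) l <;> simp [intify]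

lemma dot_snoc' {r : ℕ} (u x : Fin r → ℤ) (α kz : ℤ) :
    (Fin.snoc u α : Fin (r+1) → ℤ) ⬝ᵥ (Fin.snoc x kz) = u ⬝ᵥ x + α * kz := by
  simp [dotProduct, Fin.sum_univ_castSucc]

lemma dot_vecMulVec' {N : ℕ} (u v x w : Fin N → ℤ) :
    x ⬝ᵥ (Matrix.vecMulVec u v).mulVec w = (x ⬝ᵥ u) * (v ⬝ᵥ w) := by
  have h : (Matrix.vecMulVec u v).mulVec w = fun i => u i * (v ⬝ᵥ w) := by
    funext i
    simp [Matrix.mulVec, Matrix.vecMulVec_apply, dotProduct, Finset.mul_sum, mul_assoc]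
  rw [h]
  simp [dotProduct, Finset.sum_mul, mul_assoc]

lemma dot_extQ' {r : ℕ} (Q : Matrix (Fin r) (Fin r) ℤ) (x : Fin r → ℤ) (kz : ℤ) :
    (Fin.snoc x kz : Fin (r+1) → ℤ) ⬝ᵥ
      (Matrix.of (Fin.snoc (fun k => (Fin.snoc (Q k) 0 : Fin (r+1) → ℤ))
        (0 : Fin (r+1) → ℤ))).mulVec (Fin.snoc x kz)
    = x ⬝ᵥ Q.mulVec x := by
  have hrow : ∀ i : Fin (r+1),
      (Matrix.of (Fin.snoc (fun k => (Fin.snoc (Q k) 0 : Fin (r+1) → ℤ))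
        (0 : Fin (r+1) → ℤ))).mulVec (Fin.snoc x kz) i
      = Fin.lastCases 0 (fun k => Q k ⬝ᵥ x) i := by
    intro i
    refine Fin.lastCases ?_ (fun k => ?_) i
    · simp [Matrix.mulVec, Matrix.of_apply, dotProduct]
    · simp only [Matrix.mulVec, Matrix.of_apply, Fin.snoc_castSucc, Fin.lastCases_castSucc]
      exact dot_snoc' (Q k) x 0 kz ▸ by simp [dot_snoc']
  simp only [dotProduct]
  rw [Fin.sum_univ_castSucc]
  simp only [hrow, Fin.snoc_castSucc, Fin.snoc_last, Fin.lastCases_castSucc,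
    Fin.lastCases_last, mul_zero, add_zero]
  simp [Matrix.mulVec, dotProduct]

lemma dot_elast' {r : ℕ} (x : Fin r → ℤ) (kz : ℤ) :
    ((fun k => if k = Fin.last r then (1:ℤ) else 0) ⬝ᵥ (Fin.snoc x kz : Fin (r+1) → ℤ)) = kz := by
  simp only [dotProduct, Fin.sum_univ_castSucc, Fin.snoc_castSucc, Fin.snoc_last, if_pos rfl,
    one_mul]
  have h : ∀ i : Fin r, (if (i.castSucc : Fin (r+1)) = Fin.last r then (1:ℤ) else 0) * x i = 0 := by
    intro i
    have : (i.castSucc : Fin (r+1)) ≠ Fin.last r := by simp [Fin.ext_iff]; omega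
    simp [this]
  rw [Finset.sum_congr rfl fun i _ => h i]
  simp

lemma dot_elast'' {r : ℕ} (x : Fin r → ℤ) (kz : ℤ) :
    ((Fin.snoc x kz : Fin (r+1) → ℤ) ⬝ᵥ (fun k => if k = Fin.last r then (1:ℤ) else 0)) = kz := by
  rw [dotProduct_comm]; exact dot_elast' x kz

lemma qfY_snoc' {n r : ℕ} (Q : Matrix (Fin r) (Fin r) ℤ) (A : Matrix (Fin n) (Fin r) ℤ)
    (j : Fin n) (s t : ℤ) (x : Fin r → ℤ) (kz : ℤ) :
    (Fin.snoc x kz : Fin (r+1) → ℤ) ⬝ᵥ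
      ((Matrix.of (Fin.snoc (fun k => (Fin.snoc (Q k) 0 : Fin (r+1) → ℤ)) (0 : Fin (r+1) → ℤ))
        + s • Matrix.vecMulVec (Fin.snoc (fun k => A j k) 0) (Fin.snoc (fun k => A j k) 0)
        + t • Matrix.vecMulVec (fun k => if k = Fin.last r then (1:ℤ) else 0)
            (fun k => if k = Fin.last r then 1 else 0)).mulVec (Fin.snoc x kz))
    = x ⬝ᵥ Q.mulVec x + s * ((A j ⬝ᵥ x) * (A j ⬝ᵥ x)) + t * (kz * kz) := by
  rw [Matrix.add_mulVec, Matrix.add_mulVec, dotProduct_add, dotProduct_add,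
    Matrix.smul_mulVec, Matrix.smul_mulVec, dotProduct_smul, dotProduct_smul,
    dot_extQ', dot_vecMulVec', dot_vecMulVec', dot_elast', dot_elast'']
  have h1 : (Fin.snoc x kz : Fin (r+1) → ℤ) ⬝ᵥ (Fin.snoc (fun k => A j k) 0) = A j ⬝ᵥ x := by
    rw [dotProduct_comm, dot_snoc']; simp [dotProduct_comm]
  have h2 : (Fin.snoc (fun k => A j k) 0 : Fin (r+1) → ℤ) ⬝ᵥ (Fin.snoc x kz) = A j ⬝ᵥ x := by
    rw [dot_snoc']; simp
  rw [h1, h2]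
  simp only [smul_eq_mul]

lemma red_snoc' {n r : ℕ} (A : Matrix (Fin n) (Fin r) ℤ) (b : Fin n → ℤ) (j : Fin n)
    (v : Fin r → ZMod 2) (k : ZMod 2) :
    red₂ ((Matrix.of fun l => Fin.snoc (fun c => if l = j then 0 else A l c)
        (if l = j then 1 else 0)).mulVec (Fin.snoc (intify v) ((k.val : ℤ))) + Function.update b j 0)
      = Function.update (red₂ (A.mulVec (intify v) + b)) j k := by
  funext l
  by_cases h : l = j
  · subst h
    simp only [red₂, Function.update_self, Pi.add_apply, Matrix.mulVec, Matrix.of_apply,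
      dotProduct, Fin.sum_univ_castSucc, Fin.snoc_castSucc, Fin.snoc_last, if_pos rfl]
    simp [zcast_val']
  · simp only [red₂, Function.update_of_ne h, Pi.add_apply, Matrix.mulVec, Matrix.of_apply,
      dotProduct, Fin.sum_univ_castSucc, Fin.snoc_castSucc, Fin.snoc_last, if_neg h]
    simp


lemma sum_swap_eval {V : Type*} [Fintype V] [DecidableEq V] (φ : ZMod 2 → ℂ) (D : ℂ)
    (F : V → ℂ) (c : V → ZMod 2) (χ : V → ℂ) (δ : ZMod 2 → V → ℂ)
    (hδ : ∀ k v, δ k v = (if k = c v then 1 else 0) * χ v) :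
    (∑ k : ZMod 2, φ k * (D * ∑ v : V, F v * δ k v))
      = ∑ v : V, D * (F v * (φ (c v) * χ v)) := by
  have h1 : ∀ k, φ k * (D * ∑ v : V, F v * δ k v) = ∑ v : V, D * (F v * (φ k * δ k v)) := by
    intro k
    rw [Finset.mul_sum, Finset.mul_sum]
    exact Finset.sum_congr rfl fun v _ => by ring
  rw [Finset.sum_congr rfl fun k _ => h1 k, Finset.sum_comm]
  refine Finset.sum_congr rfl fun v _ => ?_
  have h2 : ∀ k, D * (F v * (φ k * δ k v))
      = (D * (F v * χ v)) * (if k = c v then φ k else 0) := by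
    intro k
    rw [hδ]
    by_cases h : k = c v <;> simp [h] <;> ring
  rw [Finset.sum_congr rfl fun k _ => h2 k, ← Finset.mul_sum, Finset.sum_ite_eq' Finset.univ]
  simp [mul_comm, mul_assoc, mul_left_comm]

lemma reindex_snoc {r : ℕ} (T : (Fin (r+1) → ZMod 2) → ℂ) :
    (∑ w : Fin (r+1) → ZMod 2, T w)
      = ∑ v : Fin r → ZMod 2, ∑ k : ZMod 2, T (Fin.snoc v k) := by
  rw [← Equiv.sum_comp (Fin.snocEquiv (fun _ => ZMod 2)) T, Fintype.sum_prod_type,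
    Finset.sum_comm]
  rfl


lemma sum_pick2 (y0 : ZMod 2) (f gg : ZMod 2 → ℂ) :
    (∑ k : ZMod 2, f k * (if k = y0 then gg k else 0)) = f y0 * gg y0 := by
  rw [Finset.sum_eq_single y0]
  · simp
  · intro k _ hk; simp [hk]
  · intro h; exact absurd (Finset.mem_univ _) h

/-- The `Y`-basis projector onto outcome `β` on qubit `j` maps a rank-`r`
quadratic form expansion (times `√2`) to the rank-`(r+1)` expansion with `g ↦ g - (4β+2)b_j`,
Gram matrix extended by a zero row/column plus `(2b_j + 2β - 1)·ã ãᵀ + (2β+1)·e_last e_lastᵀ`,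
row `j` of `A` zeroed with new column `e_j`, and `b_j ↦ 0`. -/
theorem qfe_measY
    (n r : ℕ) (g : ℤ) (Q : Matrix (Fin r) (Fin r) ℤ) (hQ : Q.IsSymm)
    (A : Matrix (Fin n) (Fin r) ℤ) (hA : ∀ l c, A l c = 0 ∨ A l c = 1)
    (b : Fin n → ℤ) (hb : ∀ l, b l = 0 ∨ b l = 1)
    (j : Fin n) (β : ℤ) (hβ : β = 0 ∨ β = 1) :
    (fun y => (Real.sqrt 2 : ℂ) * ((1 / 2 : ℂ) *
        ∑ k : ZMod 2, Complex.I ^ ((2 * β + 1) * (((y j).val : ℤ) - (k.val : ℤ))) *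
          qfe n r g Q A b (Function.update y j k)))
      = qfe n (r + 1) (g - (4 * β + 2) * b j)
          -- Q⁽ʸ⁾ : extend Q by a zero last row and column, then add the rank-one updates
          (Matrix.of (Fin.snoc (fun k => (Fin.snoc (Q k) 0 : Fin (r+1) → ℤ)) (0 : Fin (r+1) → ℤ))
            + (2 * b j + 2 * β - 1) •
                Matrix.vecMulVec (Fin.snoc (fun k => A j k) 0) (Fin.snoc (fun k => A j k) 0)
            + (2 * β + 1) •
                Matrix.vecMulVec (fun k => if k = Fin.last r then (1 : ℤ) else 0)
                  (fun k => if k = Fin.last r then 1 else 0))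
          -- A'' : first r columns of A with row j zeroed, last column e_j
          (Matrix.of fun l => Fin.snoc (fun c => if l = j then 0 else A l c)
              (if l = j then 1 else 0))
          -- b' : b with entry j set to 0
          (Function.update b j 0) := by
  funext y
  simp only [qfe, ind, Pi.smul_apply, Finset.sum_apply, smul_eq_mul]
  have hval : ((y j).val : ℤ) = 0 ∨ ((y j).val : ℤ) = 1 := by
    have := ZMod.val_lt (y j); omega
  have hs2ne : ((Real.sqrt 2 : ℝ) : ℂ) ≠ 0 :=
    Complex.ofReal_ne_zero.mpr (by positivity)
  have hsrne : ((Real.sqrt (2 ^ r) : ℝ) : ℂ) ≠ 0 :=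
    Complex.ofReal_ne_zero.mpr (by positivity)
  have hs2 : ((Real.sqrt 2 : ℝ) : ℂ) * ((Real.sqrt 2 : ℝ) : ℂ) = 2 := by
    rw [← Complex.ofReal_mul, Real.mul_self_sqrt (by norm_num : (0:ℝ) ≤ 2)]
    norm_num
  have hsqrt : ((Real.sqrt (2 ^ (r+1)) : ℝ) : ℂ)
      = ((Real.sqrt 2 : ℝ) : ℂ) * ((Real.sqrt (2 ^ r) : ℝ) : ℂ) := by
    rw [← Complex.ofReal_mul, ← Real.sqrt_mul (by norm_num : (0:ℝ) ≤ 2)]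
    norm_num [pow_succ, mul_comm]
  have hC : ((Real.sqrt 2 : ℝ) : ℂ) * (1/2) * (τ ^ g / ((Real.sqrt (2 ^ r) : ℝ) : ℂ))
      = τ ^ g / ((Real.sqrt (2 ^ (r+1)) : ℝ) : ℂ) := by
    rw [hsqrt, eq_div_iff (mul_ne_zero hs2ne hsrne)]
    field_simp
    linear_combination (τ ^ g) * hs2
  have hτ : τ ^ (g - (4*β+2) * b j) = τ ^ g * Complex.I ^ (-((2*β+1) * b j)) := by
    have he : g - (4*β+2) * b j = g + 2 * (-((2*β+1) * b j)) := by ring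
    rw [he, zpow_add₀ tau_ne_zero', _root_.zpow_mul, tau_sq']
  trans (∑ v : Fin r → ZMod 2, τ ^ g / ((Real.sqrt (2 ^ (r+1)) : ℝ) : ℂ) *
      (Complex.I ^ (intify v ⬝ᵥ Q.mulVec (intify v)) *
        (Complex.I ^ ((2 * β + 1) *
            (((y j).val : ℤ) - ((red₂ (A.mulVec (intify v) + b) j).val : ℤ))) *
          (if Function.update (red₂ (A.mulVec (intify v) + b)) j (y j) = y
            then (1:ℂ) else 0))))
  · -- LHS = MID
    have hδ : ∀ (k : ZMod 2) (v : Fin r → ZMod 2),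
        (if Function.update y j k = red₂ (A.mulVec (intify v) + b) then (1:ℂ) else 0)
        = (if k = red₂ (A.mulVec (intify v) + b) j then (1:ℂ) else 0) *
          (if Function.update (red₂ (A.mulVec (intify v) + b)) j (y j) = y
            then (1:ℂ) else 0) := by
      intro k v
      by_cases h1 : k = red₂ (A.mulVec (intify v) + b) j <;>
        by_cases h2 : Function.update (red₂ (A.mulVec (intify v) + b)) j (y j) = y <;>
        simp [upd_eq_iff', h1, h2]
    rw [sum_swap_eval _ _ _ _ _ _ hδ]
    rw [Finset.mul_sum, Finset.mul_sum]
    refine Finset.sum_congr rfl fun v _ => ?_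
    beta_reduce
    linear_combination (Complex.I ^ (intify v ⬝ᵥ Q.mulVec (intify v)) *
      (Complex.I ^ ((2 * β + 1) *
          (((y j).val : ℤ) - ((red₂ (A.mulVec (intify v) + b) j).val : ℤ))) *
        (if Function.update (red₂ (A.mulVec (intify v) + b)) j (y j) = y
          then (1:ℂ) else 0))) * hC
  · -- MID = RHS
    rw [reindex_snoc]
    simp only [intify_snoc', qfY_snoc', red_snoc', eq_upd_iff', ite_and, sum_pick2]
    rw [Finset.mul_sum]
    refine Finset.sum_congr rfl fun v _ => ?_
    rw [hτ]
    by_cases h2 : Function.update (red₂ (A.mulVec (intify v) + b)) j (y j) = y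
    · simp only [if_pos h2, mul_one]
      rw [div_mul_eq_mul_div, div_mul_eq_mul_div]
      congr 1
      rw [mul_assoc, ← zpow_add₀ Complex.I_ne_zero, ← zpow_add₀ Complex.I_ne_zero]
      congr 1
      apply I_zpow_congr'
      obtain ⟨u, hu⟩ := phase_arith' β (b j) (A j ⬝ᵥ intify v) (((y j).val : ℤ))
        hβ (hb j) hval
      have hu' : (-((2*β+1)*(b j)) + ((2*(b j)+2*β-1)*((A j ⬝ᵥ intify v)*(A j ⬝ᵥ intify v))
            + (2*β+1)*((((y j).val:ℤ))*(((y j).val:ℤ)))))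
          - (2*β+1)*((((y j).val:ℤ)) - ((red₂ (A.mulVec (intify v) + b) j).val : ℤ))
          = 4*u := hu
      exact ⟨-u, by linear_combination -hu'⟩
    · simp only [if_neg h2, mul_zero]
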